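/- Let D be a balanced bipartite digraph with colour classes X, Y of cardinality a ≥ 2 satisfying: d^+(u) + d^-(v) ≥ a + 1 for all u, v in opposite colour classes with uv not an arc. Let M be a complete matching from X to Y and let P = (p_1, ..., p_s) be a path compatible with M of maximal length among such paths. If p_s p_1 is an arc of D, then D contains an oriented cycle of length 2a compatible with M. -/

import Mathlib

open Finset

/-- Out-degree of a vertex in the digraph with arc relation `A`. -/
def outDeg {V : Type*} [Fintype V] (A : V → V → Prop) [DecidableRel A] (v : V) : ℕ :=
  (Finset.univ.filter (fun w => A v w)).card

/-- In-degree of a vertex. -/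
def inDeg {V : Type*} [Fintype V] (A : V → V → Prop) [DecidableRel A] (v : V) : ℕ :=
  (Finset.univ.filter (fun w => A w v)).card

/-- Number of out-neighbours of `v` lying in the set `S`. -/
def outDegOn {V : Type*} (A : V → V → Prop) [DecidableRel A] (S : Finset V) (v : V) : ℕ :=
  (S.filter (fun w => A v w)).card

/-- Number of in-neighbours of `v` lying in the set `S`. -/
def inDegOn {V : Type*} (A : V → V → Prop) [DecidableRel A] (S : Finset V) (v : V) : ℕ :=
  (S.filter (fun w => A w v)).card

/-- `D = (V, A)` is bipartite with colour classes `X`, `Y`. -/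
def IsBipartite {V : Type*} (A : V → V → Prop) (X Y : Finset V) : Prop :=
  Disjoint X Y ∧ (∀ v : V, v ∈ X ∨ v ∈ Y) ∧
    ∀ u v : V, A u v → (u ∈ X ∧ v ∈ Y) ∨ (u ∈ Y ∧ v ∈ X)

/-- An oriented path on `s` vertices `p 0, p 1, …, p (s-1)`. -/
def IsPath {V : Type*} (A : V → V → Prop) (s : ℕ) (p : ℕ → V) : Prop :=
  Set.InjOn p (Set.Iio s) ∧ ∀ i : ℕ, i + 1 < s → A (p i) (p (i + 1))

/-- An oriented cycle on `s` distinct vertices `p 0, …, p (s-1)` (indices mod `s`). -/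
def IsCycle {V : Type*} (A : V → V → Prop) (s : ℕ) (p : ℕ → V) : Prop :=
  Set.InjOn p (Set.Iio s) ∧ ∀ i : ℕ, i < s → A (p i) (p ((i + 1) % s))

/-- `M` is a matching from `X` to `Y`: an independent set of arcs with origin in `X`
and terminus in `Y`. -/
def IsMatching {V : Type*} (A : V → V → Prop) (X Y : Finset V) (M : Finset (V × V)) : Prop :=
  (∀ e ∈ M, e.1 ∈ X ∧ e.2 ∈ Y ∧ A e.1 e.2) ∧
    ∀ e ∈ M, ∀ e' ∈ M, e ≠ e' → e.1 ≠ e'.1 ∧ e.2 ≠ e'.2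

/-- A complete matching from `X` to `Y`: a matching consisting of `|X|` arcs. -/
def IsCompleteMatching {V : Type*} (A : V → V → Prop) (X Y : Finset V)
    (M : Finset (V × V)) : Prop :=
  IsMatching A X Y M ∧ M.card = X.card

/-- The path `p 0, …, p (s-1)` is compatible with the matching `M`: its arcs lie
alternately in `M` and outside `M`. -/
def PathCompat {V : Type*} (M : Finset (V × V)) (s : ℕ) (p : ℕ → V) : Prop :=
  ∀ i : ℕ, i + 2 < s → ((p i, p (i + 1)) ∈ M ↔ (p (i + 1), p (i + 2)) ∉ M)

/-- The cycle `p 0, …, p (s-1)` is compatible with the matching `M`. -/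
def CycleCompat {V : Type*} (M : Finset (V × V)) (s : ℕ) (p : ℕ → V) : Prop :=
  ∀ i : ℕ, i < s →
    ((p i, p ((i + 1) % s)) ∈ M ↔ (p ((i + 1) % s), p ((i + 2) % s)) ∉ M)

/-- The path `p 0, …, p (s-1)` avoids the vertex set `S`. -/
def Avoids {V : Type*} (s : ℕ) (p : ℕ → V) (S : Finset V) : Prop :=
  ∀ i : ℕ, i < s → p i ∉ S

section Aux
variable {V : Type*} [DecidableEq V] {A : V → V → Prop} {X Y : Finset V} {M : Finset (V × V)}

lemma match_unique_fst (hM : IsMatching A X Y M) {x y y' : V}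
    (h : (x, y) ∈ M) (h' : (x, y') ∈ M) : y = y' := by
  by_contra hne
  exact (hM.2 _ h _ h' (by simp [hne])).1 rfl

lemma match_unique_snd (hM : IsMatching A X Y M) {x x' y : V}
    (h : (x, y) ∈ M) (h' : (x', y) ∈ M) : x = x' := by
  by_contra hne
  exact (hM.2 _ h _ h' (by simp [hne])).2 rfl

lemma match_fst_surj (hM : IsCompleteMatching A X Y M) {x : V} (hx : x ∈ X) :
    ∃ y, (x, y) ∈ M := by
  have hsub : M.image Prod.fst ⊆ X := by
    intro v hv
    simp only [Finset.mem_image] at hv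
    obtain ⟨e, he, rfl⟩ := hv
    exact (hM.1.1 e he).1
  have hinj : Set.InjOn Prod.fst (M : Set (V × V)) := by
    intro e he e' he' h
    by_contra hne
    exact (hM.1.2 e (by simpa using he) e' (by simpa using he') hne).1 h
  have hcard : (M.image Prod.fst).card = X.card := by
    rw [Finset.card_image_of_injOn hinj, hM.2]
  have heq : M.image Prod.fst = X := Finset.eq_of_subset_of_card_le hsub (le_of_eq hcard.symm)
  rw [← heq] at hx
  simp only [Finset.mem_image] at hx
  obtain ⟨e, he, hfst⟩ := hx
  exact ⟨e.2, by rw [← hfst]; simpa using he⟩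

lemma match_snd_surj (hM : IsCompleteMatching A X Y M) (hYX : Y.card = X.card)
    {y : V} (hy : y ∈ Y) : ∃ x, (x, y) ∈ M := by
  have hsub : M.image Prod.snd ⊆ Y := by
    intro v hv
    simp only [Finset.mem_image] at hv
    obtain ⟨e, he, rfl⟩ := hv
    exact (hM.1.1 e he).2.1
  have hinj : Set.InjOn Prod.snd (M : Set (V × V)) := by
    intro e he e' he' h
    by_contra hne
    exact (hM.1.2 e (by simpa using he) e' (by simpa using he') hne).2 h
  have hcard : (M.image Prod.snd).card = Y.card := by
    rw [Finset.card_image_of_injOn hinj, hM.2, hYX]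
  have heq : M.image Prod.snd = Y := Finset.eq_of_subset_of_card_le hsub (le_of_eq hcard.symm)
  rw [← heq] at hy
  simp only [Finset.mem_image] at hy
  obtain ⟨e, he, hsnd⟩ := hy
  exact ⟨e.1, by rw [← hsnd]; simpa using he⟩

end Aux

lemma card_filter_mod2_range (s : ℕ) (r : ℕ) (hr : r < 2) (hs : s % 2 = 0) :
    ((Finset.range s).filter (fun m => m % 2 = r)).card = s / 2 := by
  have himg : (Finset.range s).filter (fun m => m % 2 = r)
      = (Finset.range (s / 2)).image (fun k => 2 * k + r) := by
    ext m
    simp only [Finset.mem_filter, Finset.mem_range, Finset.mem_image]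
    constructor
    · rintro ⟨hm, he⟩; exact ⟨m / 2, by omega, by omega⟩
    · rintro ⟨k, hk, rfl⟩; omega
  rw [himg, Finset.card_image_of_injective _ (fun a b h => by omega), Finset.card_range]

lemma mod_succ_mod (s t : ℕ) (hs : 2 ≤ s) : (t % s + 1) % s = (t + 1) % s := by
  conv_rhs => rw [Nat.add_mod]
  rw [Nat.one_mod_eq_one.mpr (by omega)]

lemma mod2_mod (s t : ℕ) (hs : s % 2 = 0) : t % s % 2 = t % 2 :=
  Nat.mod_mod_of_dvd t ⟨s / 2, by omega⟩


lemma key_count {V : Type*} [Fintype V] [DecidableEq V]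
    (A : V → V → Prop) [DecidableRel A] (X Y : Finset V) (a : ℕ)
    (hbip : IsBipartite A X Y) (hX : X.card = a) (hY : Y.card = a)
    (hdeg : ∀ u v : V, ((u ∈ X ∧ v ∈ Y) ∨ (u ∈ Y ∧ v ∈ X)) → ¬ A u v →
      a + 1 ≤ outDeg A u + inDeg A v)
    (M : Finset (V × V)) (hM : IsCompleteMatching A X Y M)
    (s : ℕ) (c : ℕ → V) (hs2 : 2 ≤ s) (hse : s % 2 = 0)
    (hinj : Set.InjOn c (Set.Iio s))
    (harc : ∀ m, m < s → A (c m) (c ((m + 1) % s)))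
    (hcX : ∀ m, m < s → (c m ∈ X ↔ m % 2 = 0))
    (hcM : ∀ m, m < s → ((c m, c ((m + 1) % s)) ∈ M ↔ m % 2 = 0))
    (hmax : ∀ (t : ℕ) (q : ℕ → V), IsPath A t q → PathCompat M t q → t ≤ s) :
    2 * a ≤ s := by
  by_contra hlt
  push_neg at hlt
  obtain ⟨hdisj, hcov, harcXY⟩ := hbip
  have hdisj' : ∀ v : V, v ∈ X → v ∈ Y → False := fun v hx hy =>
    Finset.disjoint_left.mp hdisj hx hy
  have hYX : Y.card = X.card := by rw [hX, hY]
  set Cim : Finset V := (Finset.range s).image c with hCim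
  set Xon : Finset V := ((Finset.range s).filter (fun m => m % 2 = 0)).image c with hXon
  set Yon : Finset V := ((Finset.range s).filter (fun m => m % 2 = 1)).image c with hYon
  have hmemCim : ∀ m, m < s → c m ∈ Cim := fun m hm =>
    Finset.mem_image.mpr ⟨m, Finset.mem_range.mpr hm, rfl⟩
  have hXon_sub : Xon ⊆ X := by
    intro v hv
    simp only [hXon, Finset.mem_image, Finset.mem_filter, Finset.mem_range] at hv
    obtain ⟨m, ⟨hm, hme⟩, rfl⟩ := hv
    exact (hcX m hm).mpr hme
  have hXon_card : Xon.card = s / 2 := by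
    rw [hXon, Finset.card_image_of_injOn (fun m hm m' hm' h => by
      simp only [Finset.coe_filter, Set.mem_setOf_eq, Finset.mem_range] at hm hm'
      exact hinj (Set.mem_Iio.mpr hm.1) (Set.mem_Iio.mpr hm'.1) h)]
    exact card_filter_mod2_range s 0 (by omega) hse
  have hYon_card : Yon.card = s / 2 := by
    rw [hYon, Finset.card_image_of_injOn (fun m hm m' hm' h => by
      simp only [Finset.coe_filter, Set.mem_setOf_eq, Finset.mem_range] at hm hm'
      exact hinj (Set.mem_Iio.mpr hm.1) (Set.mem_Iio.mpr hm'.1) h)]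
    exact card_filter_mod2_range s 1 (by omega) hse
  -- pick x ∈ X off the cycle
  have hne : (X \ Xon).Nonempty := by
    rw [← Finset.card_pos, Finset.card_sdiff_of_subset hXon_sub, hX, hXon_card]
    omega
  obtain ⟨x, hxmem⟩ := hne
  have hxX : x ∈ X := (Finset.mem_sdiff.mp hxmem).1
  have hxXon : x ∉ Xon := (Finset.mem_sdiff.mp hxmem).2
  have hxC : x ∉ Cim := by
    intro hc
    simp only [hCim, Finset.mem_image, Finset.mem_range] at hc
    obtain ⟨m, hm, rfl⟩ := hc
    rcases Nat.mod_two_eq_zero_or_one m with hm2 | hm2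
    · exact hxXon (by
        simp only [hXon, Finset.mem_image, Finset.mem_filter, Finset.mem_range]
        exact ⟨m, ⟨hm, hm2⟩, rfl⟩)
    · exact ((hcX m hm).not.mpr (by omega)) hxX
  obtain ⟨y, hxy⟩ := match_fst_surj hM hxX
  have hyY : y ∈ Y := (hM.1.1 _ hxy).2.1
  have hyC : y ∉ Cim := by
    intro hc
    simp only [hCim, Finset.mem_image, Finset.mem_range] at hc
    obtain ⟨m, hm, rfl⟩ := hc
    rcases Nat.mod_two_eq_zero_or_one m with hm2 | hm2
    · exact hdisj' _ ((hcX m hm).mpr hm2) hyY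
    · -- c m = y with m odd: then (c (m-1), c m) ∈ M, so x = c (m-1) ∈ Cim
      have hm1 : m - 1 < s := by omega
      have hMarc := (hcM (m - 1) hm1).mpr (by omega)
      have hmeq : (m - 1 + 1) % s = m := by
        rw [Nat.mod_eq_of_lt (by omega)]; omega
      rw [hmeq] at hMarc
      have := match_unique_snd hM.1 hxy hMarc
      exact hxC (this ▸ hmemCim (m - 1) hm1)
  -- Key claim: no off-cycle vertex of Y dominates any even-position cycle vertex
  have K1 : ∀ v, v ∈ Y → v ∉ Cim → ∀ j, j < s → j % 2 = 0 → ¬ A v (c j) := by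
    intro v hvY hvC j hj hje hA
    obtain ⟨xv, hxv⟩ := match_snd_surj hM hYX hvY
    have hxvX : xv ∈ X := (hM.1.1 _ hxv).1
    have hxvC : xv ∉ Cim := by
      intro hc
      simp only [hCim, Finset.mem_image, Finset.mem_range] at hc
      obtain ⟨m, hm, rfl⟩ := hc
      have hm2 : m % 2 = 0 := (hcX m hm).mp hxvX
      have hMarc := (hcM m hm).mpr hm2
      have := match_unique_fst hM.1 hxv hMarc
      exact hvC (this ▸ hmemCim ((m + 1) % s) (Nat.mod_lt _ (by omega)))
    set q : ℕ → V := fun k => if k = 0 then xv else if k = 1 then v else c ((j + (k - 2)) % s)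
      with hq
    have hq0 : q 0 = xv := rfl
    have hq1 : q 1 = v := rfl
    have hq2 : ∀ k, q (k + 2) = c ((j + k) % s) := by
      intro k; simp [hq]
    have hmodinj : ∀ t1 t2, t1 < s → t2 < s → (j + t1) % s = (j + t2) % s → t1 = t2 := by
      intro t1 t2 h1 h2 h
      have h' : t1 ≡ t2 [MOD s] := Nat.ModEq.add_left_cancel' j h
      rw [Nat.ModEq, Nat.mod_eq_of_lt h1, Nat.mod_eq_of_lt h2] at h'
      exact h'
    have hcCim : ∀ t, c (t % s) ∈ Cim := fun t => hmemCim _ (Nat.mod_lt _ (by omega))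
    have hpath : IsPath A (s + 2) q := by
      constructor
      · intro k1 hk1 k2 hk2 heq
        simp only [Set.mem_Iio] at hk1 hk2
        match k1, k2 with
        | 0, 0 => rfl
        | 0, 1 => rw [hq0, hq1] at heq; exact (hdisj' _ (heq ▸ hxvX) hvY).elim
        | 1, 0 => rw [hq0, hq1] at heq; exact (hdisj' _ hxvX (heq ▸ hvY)).elim
        | 1, 1 => rfl
        | 0, k + 2 => rw [hq0, hq2] at heq; exact absurd (heq ▸ hcCim (j + k)) hxvC
        | k + 2, 0 => rw [hq0, hq2] at heq; exact absurd (heq ▸ hcCim (j + k)) hxvC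
        | 1, k + 2 => rw [hq1, hq2] at heq; exact absurd (heq ▸ hcCim (j + k)) hvC
        | k + 2, 1 => rw [hq1, hq2] at heq; exact absurd (heq ▸ hcCim (j + k)) hvC
        | k1 + 2, k2 + 2 =>
          rw [hq2, hq2] at heq
          have := hinj (Set.mem_Iio.mpr (Nat.mod_lt (j + k1) (show 0 < s by omega)))
            (Set.mem_Iio.mpr (Nat.mod_lt (j + k2) (show 0 < s by omega))) heq
          have := hmodinj k1 k2 (by omega) (by omega) this
          omega
      · intro i hi
        match i with
        | 0 => rw [hq0, hq1]; exact (hM.1.1 _ hxv).2.2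
        | 1 =>
          rw [hq1]
          have : q 2 = c j := by rw [hq2, Nat.add_zero, Nat.mod_eq_of_lt hj]
          rw [this]; exact hA
        | k + 2 =>
          have e1 : k + 2 + 1 = (k + 1) + 2 := by omega
          rw [hq2, e1, hq2, show j + (k + 1) = j + k + 1 by omega]
          have := harc ((j + k) % s) (Nat.mod_lt _ (by omega))
          rwa [mod_succ_mod s (j + k) hs2] at this
    have hcompat : PathCompat M (s + 2) q := by
      intro i hi
      match i with
      | 0 =>
        rw [hq0, hq1]
        have hq2' : q 2 = c j := by rw [hq2, Nat.add_zero, Nat.mod_eq_of_lt hj]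
        rw [hq2']
        constructor
        · intro _ hmem
          exact hdisj' _ (hM.1.1 _ hmem).1 hvY
        · intro _; exact hxv
      | 1 =>
        have hq2' : q 2 = c j := by rw [hq2, Nat.add_zero, Nat.mod_eq_of_lt hj]
        have hq3' : q 3 = c ((j + 1) % s) := by rw [show (3:ℕ) = 1 + 2 from rfl, hq2]
        rw [hq1, hq2', hq3']
        have hMj : (c j, c ((j + 1) % s)) ∈ M := (hcM j hj).mpr hje
        constructor
        · intro hmem _
          exact hdisj' _ (hM.1.1 _ hmem).1 hvY
        · intro h; exact absurd hMj h
      | k + 2 =>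
        have e1 : k + 2 + 1 = (k + 1) + 2 := by omega
        have e2 : k + 2 + 2 = (k + 2) + 2 := rfl
        rw [hq2, e1, hq2, e2, hq2, show j + (k + 1) = j + k + 1 by omega,
          show j + (k + 2) = j + k + 2 by omega]
        have hm1 : (c ((j + k) % s), c ((j + k + 1) % s)) ∈ M ↔ (j + k) % 2 = 0 := by
          have := hcM ((j + k) % s) (Nat.mod_lt _ (show 0 < s by omega))
          rwa [mod_succ_mod s (j + k) hs2, mod2_mod s (j + k) hse] at this
        have hm2 : (c ((j + k + 1) % s), c ((j + k + 2) % s)) ∈ M ↔ (j + k + 1) % 2 = 0 := by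
          have := hcM ((j + k + 1) % s) (Nat.mod_lt _ (show 0 < s by omega))
          rw [mod_succ_mod s (j + k + 1) hs2, mod2_mod s (j + k + 1) hse] at this
          rwa [show j + k + 1 + 1 = j + k + 2 by omega] at this
        rw [hm1, hm2.not]
        omega
    have := hmax (s + 2) q hpath hcompat
    omega
  -- degree bounds
  have hc0X : c 0 ∈ X := (hcX 0 (by omega)).mpr (by omega)
  have hout : outDeg A y ≤ a - s / 2 := by
    have hsub : Finset.univ.filter (fun w => A y w) ⊆ X \ Xon := by
      intro w hw
      simp only [Finset.mem_filter, Finset.mem_univ, true_and] at hw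
      rcases harcXY _ _ hw with ⟨h1, _⟩ | ⟨_, h2⟩
      · exact absurd h1 (fun h => hdisj' _ h hyY)
      · refine Finset.mem_sdiff.mpr ⟨h2, ?_⟩
        intro hwXon
        simp only [hXon, Finset.mem_image, Finset.mem_filter, Finset.mem_range] at hwXon
        obtain ⟨m, ⟨hm, hme⟩, rfl⟩ := hwXon
        exact K1 y hyY hyC m hm hme hw
    calc outDeg A y ≤ (X \ Xon).card := Finset.card_le_card hsub
    _ = a - s / 2 := by rw [Finset.card_sdiff_of_subset hXon_sub, hX, hXon_card]
  have hin : inDeg A (c 0) ≤ s / 2 := by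
    have hsub : Finset.univ.filter (fun w => A w (c 0)) ⊆ Yon := by
      intro w hw
      simp only [Finset.mem_filter, Finset.mem_univ, true_and] at hw
      have hwY : w ∈ Y := by
        rcases harcXY _ _ hw with ⟨_, h2⟩ | ⟨h1, _⟩
        · exact absurd h2 (fun h => hdisj' _ hc0X h)
        · exact h1
      have hwC : w ∈ Cim := by
        by_contra hwC
        exact K1 w hwY hwC 0 (by omega) (by omega) hw
      simp only [hCim, Finset.mem_image, Finset.mem_range] at hwC
      obtain ⟨m, hm, rfl⟩ := hwC
      have hmo : m % 2 = 1 := by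
        rcases Nat.mod_two_eq_zero_or_one m with h | h
        · exact absurd ((hcX m hm).mpr h) (fun hh => hdisj' _ hh hwY)
        · exact h
      simp only [hYon, Finset.mem_image, Finset.mem_filter, Finset.mem_range]
      exact ⟨m, ⟨hm, hmo⟩, rfl⟩
    calc inDeg A (c 0) ≤ Yon.card := Finset.card_le_card hsub
    _ = s / 2 := hYon_card
  have hnA : ¬ A y (c 0) := K1 y hyY hyC 0 (by omega) (by omega)
  have := hdeg y (c 0) (Or.inr ⟨hyY, hc0X⟩) hnA
  unfold outDeg inDeg at *
  omega

lemma cycleCompat_of_parity {V : Type*} {M : Finset (V × V)} {s : ℕ} {c : ℕ → V}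
    (hs2 : 2 ≤ s) (hse : s % 2 = 0)
    (hcM : ∀ m, m < s → ((c m, c ((m + 1) % s)) ∈ M ↔ m % 2 = 0)) :
    CycleCompat M s c := by
  intro i hi
  have h1 := hcM i hi
  have h2 := hcM ((i + 1) % s) (Nat.mod_lt _ (by omega))
  rw [mod_succ_mod s (i + 1) hs2, show i + 1 + 1 = i + 2 by omega] at h2
  rw [h1, h2]
  have := mod2_mod s (i + 1) hse
  omega

lemma path_parity {V : Type*} {A : V → V → Prop} {X Y : Finset V}
    (hdisj' : ∀ v : V, v ∈ X → v ∈ Y → False)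
    (harcXY : ∀ u v : V, A u v → (u ∈ X ∧ v ∈ Y) ∨ (u ∈ Y ∧ v ∈ X))
    {s : ℕ} {p : ℕ → V} (pArc : ∀ i, i + 1 < s → A (p i) (p (i + 1)))
    {r : ℕ} (hr : r < 2) (h0 : p 0 ∈ X ↔ 0 % 2 = r) :
    ∀ i, i < s → (p i ∈ X ↔ i % 2 = r) := by
  intro i
  induction i with
  | zero => intro _; exact h0
  | succ n ih =>
    intro hn
    have hXn := ih (by omega)
    rcases harcXY _ _ (pArc n hn) with ⟨h1, h2⟩ | ⟨h1, h2⟩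
    · have hn0 : n % 2 = r := hXn.mp h1
      constructor
      · intro hh; exact (hdisj' _ hh h2).elim
      · intro hh; omega
    · have hn1 : ¬ n % 2 = r := fun he => hdisj' _ (hXn.mpr he) h1
      constructor
      · intro _; omega
      · intro _; exact h2

theorem stmt_2 {V : Type*} [Fintype V] [DecidableEq V]
    (A : V → V → Prop) [DecidableRel A] (X Y : Finset V) (a : ℕ)
    (ha : 2 ≤ a) (hbip : IsBipartite A X Y) (hX : X.card = a) (hY : Y.card = a)
    (hdeg : ∀ u v : V, ((u ∈ X ∧ v ∈ Y) ∨ (u ∈ Y ∧ v ∈ X)) → ¬ A u v →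
      a + 1 ≤ outDeg A u + inDeg A v)
    (M : Finset (V × V)) (hM : IsCompleteMatching A X Y M)
    (s : ℕ) (p : ℕ → V) (hs : 1 ≤ s)
    (hp : IsPath A s p ∧ PathCompat M s p)
    (hmax : ∀ (t : ℕ) (q : ℕ → V), IsPath A t q → PathCompat M t q → t ≤ s)
    (hclose : A (p (s - 1)) (p 0)) :
    ∃ q : ℕ → V, IsCycle A (2 * a) q ∧ CycleCompat M (2 * a) q := by
  have hbip' := hbip
  obtain ⟨⟨pInj, pArc⟩, pCompat⟩ := hp
  obtain ⟨hdisj, hcov, harcXY⟩ := hbip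
  have hdisj' : ∀ v : V, v ∈ X → v ∈ Y → False := fun v hx hy =>
    Finset.disjoint_left.mp hdisj hx hy
  have hYX : Y.card = X.card := by rw [hX, hY]
  have hMmem := hM.1.1
  have hs2 : 2 ≤ s := by
    by_contra h
    have hs1 : s = 1 := by omega
    rw [hs1] at hclose
    simp only [Nat.sub_self] at hclose
    rcases harcXY _ _ hclose with ⟨h1, h2⟩ | ⟨h1, h2⟩
    · exact hdisj' _ h1 h2
    · exact hdisj' _ h2 h1
  have hsle : s ≤ 2 * a := by
    have himg : ((Finset.range s).image p).card = s := by
      rw [Finset.card_image_of_injOn (fun m hm m' hm' h => pInj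
        (Set.mem_Iio.mpr (Finset.mem_range.mp (by simpa using hm)))
        (Set.mem_Iio.mpr (Finset.mem_range.mp (by simpa using hm'))) h), Finset.card_range]
    have huniv : ((Finset.range s).image p).card ≤ (Finset.univ : Finset V).card :=
      Finset.card_le_card (Finset.subset_univ _)
    have hcardV : (Finset.univ : Finset V).card = 2 * a := by
      have hu : (Finset.univ : Finset V) = X ∪ Y := by
        ext v
        simp only [Finset.mem_univ, true_iff, Finset.mem_union]
        exact hcov v
      rw [hu, Finset.card_union_of_disjoint hdisj, hX, hY]
      omega
    omega
  suffices h : ∃ c : ℕ → V, Set.InjOn c (Set.Iio s) ∧ (∀ m, m < s → A (c m) (c ((m + 1) % s)))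
      ∧ (∀ m, m < s → (c m ∈ X ↔ m % 2 = 0))
      ∧ (∀ m, m < s → ((c m, c ((m + 1) % s)) ∈ M ↔ m % 2 = 0))
      ∧ s % 2 = 0 by
    obtain ⟨c, hcinj, hcarc, hcX, hcM, hse⟩ := h
    have h2a := key_count A X Y a hbip' hX hY hdeg M hM s c hs2 hse hcinj hcarc hcX hcM hmax
    have hseq : s = 2 * a := le_antisymm hsle h2a
    refine ⟨c, ?_, ?_⟩
    · rw [← hseq]; exact ⟨hcinj, hcarc⟩
    · rw [← hseq]; exact cycleCompat_of_parity hs2 hse hcM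
  rcases hcov (p 0) with hp0 | hp0
  · -- Case A : p 0 ∈ X
    have pX : ∀ i, i < s → (p i ∈ X ↔ i % 2 = 0) :=
      path_parity hdisj' harcXY pArc (by omega) (iff_of_true hp0 rfl)
    have hps1Y : ¬ ((s - 1) % 2 = 0) := by
      rcases harcXY _ _ hclose with ⟨h1, h2⟩ | ⟨h1, h2⟩
      · exact (hdisj' _ hp0 h2).elim
      · intro he; exact hdisj' _ ((pX (s - 1) (by omega)).mpr he) h1
    have hse : s % 2 = 0 := by omega
    have hM01 : (p 0, p 1) ∈ M := by
      by_contra hnm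
      by_cases hs3 : 3 ≤ s
      · have hcomp := pCompat 0 (by omega)
        have h12 : (p 1, p 2) ∈ M := by
          by_contra h12
          exact hnm (hcomp.mpr h12)
        have := (pX 1 (by omega)).mp (hMmem _ h12).1
        omega
      · have hs2' : s = 2 := by omega
        obtain ⟨y, hy⟩ := match_fst_surj hM hp0
        have hyY : y ∈ Y := (hMmem _ hy).2.1
        have hyne1 : y ≠ p 1 := fun h => hnm (h ▸ hy)
        have hclose' : A (p 1) (p 0) := by
          rw [hs2'] at hclose; simpa using hclose
        set q : ℕ → V := fun k => if k = 0 then p 1 else if k = 1 then p 0 else y with hq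
        have hq0 : q 0 = p 1 := rfl
        have hq1 : q 1 = p 0 := rfl
        have hq2' : q 2 = y := rfl
        have hne01 : p 0 ≠ p 1 := by
          intro h
          have := pInj (Set.mem_Iio.mpr (by omega)) (Set.mem_Iio.mpr (by omega)) h
          omega
        have hp1nX : p 1 ∉ X := by
          intro hh
          have := (pX 1 (by omega)).mp hh
          omega
        have hpath : IsPath A 3 q := by
          constructor
          · intro k1 hk1 k2 hk2 heq
            simp only [Set.mem_Iio] at hk1 hk2
            match k1, k2 with
            | 0, 0 => rfl
            | 1, 1 => rfl
            | 2, 2 => rfl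
            | 0, 1 => rw [hq0, hq1] at heq; exact (hne01 heq.symm).elim
            | 1, 0 => rw [hq0, hq1] at heq; exact (hne01 heq).elim
            | 0, 2 => rw [hq0, hq2'] at heq; exact (hyne1 heq.symm).elim
            | 2, 0 => rw [hq0, hq2'] at heq; exact (hyne1 heq).elim
            | 1, 2 => rw [hq1, hq2'] at heq; exact (hdisj' _ hp0 (heq ▸ hyY)).elim
            | 2, 1 => rw [hq1, hq2'] at heq; exact (hdisj' _ hp0 (heq.symm ▸ hyY)).elim
          · intro i hi
            match i with
            | 0 => rw [hq0, hq1]; exact hclose'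
            | 1 => rw [hq1, hq2']; exact (hMmem _ hy).2.2
        have hcomp : PathCompat M 3 q := by
          intro i hi
          match i with
          | 0 =>
            rw [hq0, hq1, hq2']
            constructor
            · intro hmem; exact (hp1nX (hMmem _ hmem).1).elim
            · intro hmem; exact (hmem hy).elim
        have := hmax 3 q hpath hcomp
        omega
    have arcOdd : ∀ i, i + 1 < s → i % 2 = 1 → (p i, p (i + 1)) ∉ M := by
      intro i hi ho hmem
      have := (pX i (by omega)).mp (hMmem _ hmem).1
      omega
    have arcM : ∀ i, i + 1 < s → ((p i, p (i + 1)) ∈ M ↔ i % 2 = 0) := by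
      intro i hi
      rcases Nat.mod_two_eq_zero_or_one i with he | he
      · rcases Nat.eq_zero_or_pos i with rfl | hip
        · exact iff_of_true hM01 rfl
        · have hcomp := pCompat (i - 1) (by omega)
          rw [show i - 1 + 1 = i by omega, show i - 1 + 2 = i + 1 by omega] at hcomp
          have hodd := arcOdd (i - 1) (by omega) (by omega)
          rw [show i - 1 + 1 = i by omega] at hodd
          refine iff_of_true ?_ he
          by_contra hnm
          exact hodd (hcomp.mpr hnm)
      · exact iff_of_false (arcOdd i hi he) (by omega)
    refine ⟨p, pInj, ?_, pX, ?_, hse⟩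
    · intro m hm
      rcases eq_or_lt_of_le (show m + 1 ≤ s by omega) with he | hlt'
      · have h0 : (m + 1) % s = 0 := by rw [he, Nat.mod_self]
        rw [h0, show m = s - 1 by omega]
        exact hclose
      · rw [Nat.mod_eq_of_lt hlt']; exact pArc m hlt'
    · intro m hm
      rcases eq_or_lt_of_le (show m + 1 ≤ s by omega) with he | hlt'
      · have h0 : (m + 1) % s = 0 := by rw [he, Nat.mod_self]
        rw [h0]
        refine iff_of_false ?_ (by omega)
        intro hmem
        have := (pX m (by omega)).mp (hMmem _ hmem).1
        omega
      · rw [Nat.mod_eq_of_lt hlt']; exact arcM m hlt'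
  · -- Case B : p 0 ∈ Y
    have hp0nX : p 0 ∉ X := fun h => hdisj' _ h hp0
    have pX : ∀ i, i < s → (p i ∈ X ↔ i % 2 = 1) :=
      path_parity hdisj' harcXY pArc (by omega) (iff_of_false hp0nX (by omega))
    obtain ⟨x, hx⟩ := match_snd_surj hM hYX hp0
    have hxX : x ∈ X := (hMmem _ hx).1
    have hxon : ∃ j, j < s ∧ p j = x := by
      by_contra hno
      push_neg at hno
      set q : ℕ → V := fun k => if k = 0 then x else p (k - 1) with hq
      have hq0 : q 0 = x := rfl
      have hqk : ∀ k, q (k + 1) = p k := by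
        intro k
        simp only [hq]
        rw [if_neg (Nat.succ_ne_zero k)]
        simp
      have hpath : IsPath A (s + 1) q := by
        constructor
        · intro k1 hk1 k2 hk2 heq
          simp only [Set.mem_Iio] at hk1 hk2
          match k1, k2 with
          | 0, 0 => rfl
          | 0, k + 1 =>
            rw [hq0, hqk] at heq
            exact absurd heq.symm (hno k (by omega))
          | k + 1, 0 =>
            rw [hq0, hqk] at heq
            exact absurd heq (hno k (by omega))
          | k1 + 1, k2 + 1 =>
            rw [hqk, hqk] at heq
            have := pInj (Set.mem_Iio.mpr (by omega)) (Set.mem_Iio.mpr (by omega)) heq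
            omega
        · intro i hi
          match i with
          | 0 => rw [hq0, hqk]; exact (hMmem _ hx).2.2
          | k + 1 =>
            rw [hqk, show k + 1 + 1 = (k + 1) + 1 from rfl, hqk]
            exact pArc k (by omega)
      have hcomp : PathCompat M (s + 1) q := by
        intro i hi
        match i with
        | 0 =>
          rw [hq0, hqk, show (2 : ℕ) = 1 + 1 from rfl, hqk]
          refine iff_of_true hx ?_
          intro hmem
          exact hdisj' _ (hMmem _ hmem).1 hp0
        | k + 1 =>
          rw [hqk, show k + 1 + 1 = (k + 1) + 1 from rfl, hqk,
            show k + 1 + 2 = (k + 2) + 1 from rfl, hqk]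
          exact pCompat k (by omega)
      have := hmax (s + 1) q hpath hcomp
      omega
    obtain ⟨j, hj, hpj⟩ := hxon
    have hpjX : p j ∈ X := by rw [hpj]; exact hxX
    have hj0 : j ≠ 0 := by
      intro h
      rw [h] at hpjX
      exact hp0nX hpjX
    have hjs1 : j = s - 1 := by
      by_contra hne
      have hj1 : j + 1 < s := by omega
      have hnm : (p j, p (j + 1)) ∉ M := by
        intro hmem
        rw [hpj] at hmem
        have h1 := match_unique_fst hM.1 hmem hx
        have := pInj (Set.mem_Iio.mpr hj1) (Set.mem_Iio.mpr (by omega)) h1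
        omega
      have hcomp := pCompat (j - 1) (by omega)
      rw [show j - 1 + 1 = j by omega, show j - 1 + 2 = j + 1 by omega] at hcomp
      have hmem := hcomp.mpr hnm
      exact hdisj' _ hpjX (hMmem _ hmem).2.1
    have hps1 : p (s - 1) = x := by rw [← hjs1]; exact hpj
    have hMclose : (p (s - 1), p 0) ∈ M := by rw [hps1]; exact hx
    have hse : s % 2 = 0 := by
      have := (pX (s - 1) (by omega)).mp (by rw [hps1]; exact hxX)
      omega
    have arcEven : ∀ i, i + 1 < s → i % 2 = 0 → (p i, p (i + 1)) ∉ M := by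
      intro i hi he hmem
      have := (pX i (by omega)).mp (hMmem _ hmem).1
      omega
    have arcM : ∀ i, i + 1 < s → ((p i, p (i + 1)) ∈ M ↔ i % 2 = 1) := by
      intro i hi
      rcases Nat.mod_two_eq_zero_or_one i with he | he
      · exact iff_of_false (arcEven i hi he) (by omega)
      · have hi2 : i + 2 < s := by
          rcases eq_or_lt_of_le (show i + 2 ≤ s by omega) with h2 | h2
          · omega
          · exact h2
        have hcomp := pCompat i hi2
        have hnext := arcEven (i + 1) (by omega) (by omega)
        exact iff_of_true (hcomp.mpr hnext) he
    set c : ℕ → V := fun i => if i = 0 then p (s - 1) else p (i - 1) with hc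
    have hc0 : c 0 = p (s - 1) := rfl
    have hck : ∀ k, c (k + 1) = p k := by
      intro k
      simp only [hc]
      rw [if_neg (Nat.succ_ne_zero k)]
      simp
    refine ⟨c, ?_, ?_, ?_, ?_, hse⟩
    · intro k1 hk1 k2 hk2 heq
      simp only [Set.mem_Iio] at hk1 hk2
      match k1, k2 with
      | 0, 0 => rfl
      | 0, k + 1 =>
        rw [hc0, hck] at heq
        have := pInj (Set.mem_Iio.mpr (by omega)) (Set.mem_Iio.mpr (by omega)) heq
        omega
      | k + 1, 0 =>
        rw [hc0, hck] at heq
        have := pInj (Set.mem_Iio.mpr (by omega)) (Set.mem_Iio.mpr (by omega)) heq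
        omega
      | k1 + 1, k2 + 1 =>
        rw [hck, hck] at heq
        have := pInj (Set.mem_Iio.mpr (by omega)) (Set.mem_Iio.mpr (by omega)) heq
        omega
    · intro m hm
      match m with
      | 0 =>
        rw [hc0, Nat.mod_eq_of_lt (show 0 + 1 < s by omega), hck]
        exact hclose
      | k + 1 =>
        rcases eq_or_lt_of_le (show k + 2 ≤ s by omega) with he | hlt'
        · have h0 : (k + 1 + 1) % s = 0 := by rw [show k + 1 + 1 = s by omega, Nat.mod_self]
          rw [h0, hck, hc0, show k = s - 2 by omega]
          have := pArc (s - 2) (by omega)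
          rwa [show s - 2 + 1 = s - 1 by omega] at this
        · rw [Nat.mod_eq_of_lt (by omega), hck, show k + 1 + 1 = (k + 1) + 1 from rfl, hck]
          exact pArc k (by omega)
    · intro m hm
      match m with
      | 0 =>
        rw [hc0]
        refine iff_of_true ?_ rfl
        exact (pX (s - 1) (by omega)).mpr (by omega)
      | k + 1 =>
        rw [hck]
        have := pX k (by omega)
        rw [this]
        omega
    · intro m hm
      match m with
      | 0 =>
        rw [hc0, Nat.mod_eq_of_lt (show 0 + 1 < s by omega), hck]
        exact iff_of_true hMclose rfl
      | k + 1 =>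
        rcases eq_or_lt_of_le (show k + 2 ≤ s by omega) with he | hlt'
        · have h0 : (k + 1 + 1) % s = 0 := by rw [show k + 1 + 1 = s by omega, Nat.mod_self]
          rw [h0, hck, hc0]
          have := arcM (s - 2) (by omega)
          rw [show s - 2 + 1 = s - 1 by omega] at this
          rw [show k = s - 2 by omega, this]
          omega
        · rw [Nat.mod_eq_of_lt (by omega), hck, show k + 1 + 1 = (k + 1) + 1 from rfl, hck]
          rw [arcM k (by omega)]
          omega
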